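/- arXiv:2009.08574 — 4 statements merged into one kernel-verified Lean document; each statement's English description precedes it below -/
import Mathlib

section
/- Let f : ℝ^d → ℝ be differentiable, nonnegative, L-smooth and μ-PL* (with L, μ > 0). Fix a step size η with 0 < η < 2/L, and let the sequence (w^{(t)}) be defined by gradient descent w^{(t+1)} = w^{(t)} − η ∇f(w^{(t)}). Then for every t, f(w^{(t+1)}) ≤ (1 − 2μη + μLη²) f(w^{(t)}), the factor satisfies 1 − 2μη + μLη² < 1, and consequently f(w^{(t)}) → 0 as t → ∞. -/
open intervalIntegral

lemma descent_lemma {d : ℕ} (f : EuclideanSpace ℝ (Fin d) → ℝ) (L : ℝ) (hL : 0 ≤ L)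
    (hdiff : Differentiable ℝ f)
    (hsmooth : ∀ x y, ‖gradient f x - gradient f y‖ ≤ L * ‖x - y‖)
    (x y : EuclideanSpace ℝ (Fin d)) :
    f y ≤ f x + inner ℝ (gradient f x) (y - x) + L / 2 * ‖y - x‖ ^ 2 := by
  set v := y - x with hv
  have hgradlip : LipschitzWith (Real.toNNReal L) (gradient f) := by
    apply LipschitzWith.of_dist_le_mul
    intro a b
    rw [dist_eq_norm, dist_eq_norm]
    simpa [Real.coe_toNNReal L hL] using hsmooth a b
  have hgradcont : Continuous (gradient f) := hgradlip.continuous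
  set c : ℝ → EuclideanSpace ℝ (Fin d) := fun t => x + t • v with hc
  have hcder : ∀ t : ℝ, HasDerivAt c v t := by
    intro t
    simpa only [id, one_smul] using ((hasDerivAt_id t).smul_const v).const_add x
  set g' : ℝ → ℝ := fun t => inner ℝ (gradient f (c t)) v with hg'
  have hgder : ∀ t : ℝ, HasDerivAt (fun s => f (c s)) (g' t) t := by
    intro t
    have hF : HasFDerivAt f ((InnerProductSpace.toDual ℝ _) (gradient f (c t))) (c t) :=
      ((hdiff (c t)).hasGradientAt).hasFDerivAt
    have this : HasDerivAt (fun s => f (c s))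
        ((InnerProductSpace.toDual ℝ _) (gradient f (c t)) v) t := hF.comp_hasDerivAt t (hcder t)
    simpa [g', InnerProductSpace.toDual_apply_apply] using this
  have hccont : Continuous c := by continuity
  have hg'cont : Continuous g' := by
    exact (continuous_inner.comp ((hgradcont.comp hccont).prodMk continuous_const))
  have hint : ∫ t in (0:ℝ)..1, g' t = f (c 1) - f (c 0) :=
    intervalIntegral.integral_eq_sub_of_hasDerivAt (f := fun s => f (c s))
      (fun t _ => hgder t) (hg'cont.intervalIntegrable 0 1)
  have hc0 : c 0 = x := by simp [c]
  have hc1 : c 1 = y := by simp [c, v]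
  -- bound the integral
  have hbound : ∀ t ∈ Set.Icc (0:ℝ) 1, g' t ≤ inner ℝ (gradient f x) v + L * t * ‖v‖ ^ 2 := by
    intro t ht
    have h1 : g' t - inner ℝ (gradient f x) v = inner ℝ (gradient f (c t) - gradient f x) v := by
      simp [g', inner_sub_left]
    have h2 : inner ℝ (gradient f (c t) - gradient f x) v ≤
        ‖gradient f (c t) - gradient f x‖ * ‖v‖ := real_inner_le_norm _ _
    have h3 : ‖gradient f (c t) - gradient f x‖ ≤ L * (t * ‖v‖) := by
      have := hsmooth (c t) x
      have hct : ‖c t - x‖ = t * ‖v‖ := by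
        simp [c, norm_smul, abs_of_nonneg ht.1]
      rw [hct] at this; exact this
    nlinarith [norm_nonneg v, mul_le_mul_of_nonneg_right h3 (norm_nonneg v)]
  have hmono : ∫ t in (0:ℝ)..1, g' t ≤
      ∫ t in (0:ℝ)..1, (inner ℝ (gradient f x) v + L * t * ‖v‖ ^ 2) := by
    apply intervalIntegral.integral_mono_on (by norm_num) (hg'cont.intervalIntegrable 0 1)
    · exact ((by fun_prop : Continuous fun t : ℝ =>
        (inner ℝ (gradient f x) v : ℝ) + L * t * ‖v‖ ^ 2).intervalIntegrable 0 1)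
    · exact hbound
  have hval : ∫ t in (0:ℝ)..1, (inner ℝ (gradient f x) v + L * t * ‖v‖ ^ 2)
      = inner ℝ (gradient f x) v + L / 2 * ‖v‖ ^ 2 := by
    rw [intervalIntegral.integral_add ((continuous_const :
      Continuous fun _ : ℝ => (inner ℝ (gradient f x) v : ℝ)).intervalIntegrable 0 1)
      ((by fun_prop : Continuous fun t : ℝ => L * t * ‖v‖ ^ 2).intervalIntegrable 0 1)]
    have h1 : ∫ _ in (0:ℝ)..1, (inner ℝ (gradient f x) v : ℝ) = inner ℝ (gradient f x) v := by
      simp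
    have h2 : ∫ t in (0:ℝ)..1, L * t * ‖v‖ ^ 2 = L / 2 * ‖v‖ ^ 2 := by
      have he : (fun t : ℝ => L * t * ‖v‖ ^ 2) = fun t : ℝ => (L * ‖v‖ ^ 2) * t := by
        funext t; ring
      rw [he, intervalIntegral.integral_const_mul, integral_id]; ring
    rw [h1, h2]
  have := hmono
  rw [hint, hval, hc0, hc1] at this
  linarith

/-- Gradient descent on a nonnegative, `L`-smooth, `μ`-PL* function
with step size `0 < η < 2/L` contracts the loss by the factor `1 - 2μη + μLη² < 1`
at every step, and the loss converges to `0`. -/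
theorem gd_linear_convergence_PLstar {d : ℕ}
    (f : EuclideanSpace ℝ (Fin d) → ℝ) (L μ η : ℝ)
    (hL : 0 < L) (hμ : 0 < μ)
    (hdiff : Differentiable ℝ f)
    (hsmooth : ∀ x y, ‖gradient f x - gradient f y‖ ≤ L * ‖x - y‖)
    (hnonneg : ∀ x, 0 ≤ f x)
    (hPL : ∀ x, μ * f x ≤ (1 / 2) * ‖gradient f x‖ ^ 2)
    (hη : 0 < η) (hη2 : η < 2 / L)
    (w : ℕ → EuclideanSpace ℝ (Fin d))
    (hstep : ∀ t, w (t + 1) = w t - η • gradient f (w t)) :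
    (∀ t, f (w (t + 1)) ≤ (1 - 2 * μ * η + μ * L * η ^ 2) * f (w t)) ∧
      (1 - 2 * μ * η + μ * L * η ^ 2 < 1) ∧
      Filter.Tendsto (fun t => f (w t)) Filter.atTop (nhds 0) := by
  have hLη : L * η < 2 := by
    have := (lt_div_iff₀ hL).mp hη2
    linarith
  have hmain : ∀ t, f (w (t + 1)) ≤ (1 - 2 * μ * η + μ * L * η ^ 2) * f (w t) := by
    intro t
    set g := gradient f (w t) with hg
    have hdesc := descent_lemma f L hL.le hdiff hsmooth (w t) (w (t + 1))
    have hsub : w (t + 1) - w t = (-η) • g := by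
      rw [hstep t]; module
    rw [hsub] at hdesc
    have hinner : (inner ℝ g ((-η) • g) : ℝ) = -η * ‖g‖ ^ 2 := by
      rw [real_inner_smul_right, real_inner_self_eq_norm_sq]
    have hnorm : ‖(-η) • g‖ ^ 2 = η ^ 2 * ‖g‖ ^ 2 := by
      rw [norm_smul]; rw [norm_neg, Real.norm_eq_abs, abs_of_pos hη]; ring
    rw [hinner, hnorm] at hdesc
    have hpl := hPL (w t)
    have hfn := hnonneg (w t)
    nlinarith [sq_nonneg ‖g‖, mul_pos hη hμ, mul_nonneg (mul_nonneg hη.le hμ.le) hfn,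
      mul_nonneg (mul_nonneg hη.le (sub_nonneg.mpr hLη.le)) (sub_nonneg.mpr hpl)]
  have hlt : 1 - 2 * μ * η + μ * L * η ^ 2 < 1 := by nlinarith [mul_pos hμ hη]
  refine ⟨hmain, hlt, ?_⟩
  set q := 1 - 2 * μ * η + μ * L * η ^ 2 with hq
  set r := max q 0 with hr
  have hr0 : 0 ≤ r := le_max_right _ _
  have hr1 : r < 1 := max_lt hlt one_pos
  have hstep' : ∀ t, f (w (t + 1)) ≤ r * f (w t) := fun t =>
    (hmain t).trans (mul_le_mul_of_nonneg_right (le_max_left _ _) (hnonneg _))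
  have hbound : ∀ t, f (w t) ≤ r ^ t * f (w 0) := by
    intro t
    induction t with
    | zero => simp
    | succ n ih =>
      calc f (w (n + 1)) ≤ r * f (w n) := hstep' n
        _ ≤ r * (r ^ n * f (w 0)) := mul_le_mul_of_nonneg_left ih hr0
        _ = r ^ (n + 1) * f (w 0) := by ring
  have htend : Filter.Tendsto (fun t => r ^ t * f (w 0)) Filter.atTop (nhds 0) := by
    have := (tendsto_pow_atTop_nhds_zero_of_lt_one hr0 hr1).mul_const (f (w 0))
    simpa using this
  exact squeeze_zero (fun t => hnonneg _) hbound htend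
end

section
/- Let f : ℝ^d → ℝ be differentiable and let φ : ℝ^d → ℝ^d satisfy conditions (a) and (b) with constants 0 < α_l ≤ α_u. Fix w ∈ ℝ^d and a step size η > 0 with η · 2√d · ‖∇f(w)‖ < 1, and set w' = φ⁻¹(φ(w) − η ∇f(w)). Then ‖w' − w‖² ≤ (η²/α_l² + η²/(4α_u²)) ‖∇f(w)‖². -/
/-- Under conditions (a) and (b) on the mirror `φ`, a single generalized
mirror descent step `w' = φ⁻¹(φ(w) - η∇f(w))` with `η·2√d·‖∇f(w)‖ < 1` satisfies
`‖w' - w‖² ≤ (η²/α_l² + η²/(4α_u²))‖∇f(w)‖²`. -/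
theorem gmd_step_norm_bound {d : ℕ}
    (f : EuclideanSpace ℝ (Fin d) → ℝ)
    (hdiff : Differentiable ℝ f)
    (φ φinv : EuclideanSpace ℝ (Fin d) → EuclideanSpace ℝ (Fin d))
    (αl αu : ℝ) (hαl : 0 < αl) (hαlu : αl ≤ αu)
    -- condition (a)
    (hbij : Function.Bijective φ)
    (hleft : Function.LeftInverse φinv φ) (hright : Function.RightInverse φinv φ)
    (hφ_analytic : AnalyticOnNhd ℝ φ Set.univ)
    (hφinv_analytic : AnalyticOnNhd ℝ φinv Set.univ)
    (hjac : ∀ x v, αl * ‖v‖ ^ 2 ≤ (inner ℝ (fderiv ℝ φ x v) v : ℝ) ∧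
      (inner ℝ (fderiv ℝ φ x v) v : ℝ) ≤ αu * ‖v‖ ^ 2)
    -- condition (b)
    (hhigher : ∀ k : ℕ, 2 ≤ k → ∀ j : Fin d, ∀ i : Fin k → Fin d,
      ∀ x : EuclideanSpace ℝ (Fin d),
        |iteratedFDeriv ℝ k (fun y => φinv y j) x (fun m => EuclideanSpace.single (i m) 1)| ≤
          (Nat.factorial k : ℝ) / (2 * αu * d))
    (w : EuclideanSpace ℝ (Fin d)) (η : ℝ) (hη : 0 < η)
    (hηgrad : η * 2 * Real.sqrt d * ‖gradient f w‖ < 1)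
    (w' : EuclideanSpace ℝ (Fin d))
    (hstep : w' = φinv (φ w - η • gradient f w)) :
    ‖w' - w‖ ^ 2 ≤ (η ^ 2 / αl ^ 2 + η ^ 2 / (4 * αu ^ 2)) * ‖gradient f w‖ ^ 2 := by
  have hφd : ∀ x, DifferentiableAt ℝ φ x := fun x => (hφ_analytic x (Set.mem_univ x)).differentiableAt
  have hφinvd : ∀ x, DifferentiableAt ℝ φinv x := fun x => (hφinv_analytic x (Set.mem_univ x)).differentiableAt
  -- chain rule: J_φ(φinv y) ∘ J_φinv(y) = id
  have hcomp : ∀ y u, fderiv ℝ φ (φinv y) (fderiv ℝ φinv y u) = u := by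
    intro y u
    have hid : (φ ∘ φinv) = id := funext hright
    have h1 : fderiv ℝ (φ ∘ φinv) y = ContinuousLinearMap.id ℝ _ := by
      rw [hid]; exact fderiv_id
    have h2 : fderiv ℝ (φ ∘ φinv) y = (fderiv ℝ φ (φinv y)).comp (fderiv ℝ φinv y) :=
      fderiv_comp y (hφd _) (hφinvd y)
    have := h1 ▸ h2
    calc fderiv ℝ φ (φinv y) (fderiv ℝ φinv y u)
        = ((fderiv ℝ φ (φinv y)).comp (fderiv ℝ φinv y)) u := rfl
      _ = ContinuousLinearMap.id ℝ _ u := by rw [← this]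
      _ = u := rfl
  -- operator norm bound on J_φinv
  have hopnorm : ∀ y, ‖fderiv ℝ φinv y‖ ≤ 1 / αl := by
    intro y
    apply ContinuousLinearMap.opNorm_le_bound _ (by positivity)
    intro u
    set v := fderiv ℝ φinv y u with hv
    have h1 : αl * ‖v‖ ^ 2 ≤ (inner ℝ (fderiv ℝ φ (φinv y) v) v : ℝ) := (hjac _ _).1
    rw [hcomp y u] at h1
    have h2 : (inner ℝ u v : ℝ) ≤ ‖u‖ * ‖v‖ := real_inner_le_norm u v
    rcases eq_or_lt_of_le (norm_nonneg v) with h | h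
    · rw [← h]; positivity
    · have : αl * ‖v‖ ≤ ‖u‖ := by
        have := h1.trans h2
        nlinarith
      rw [div_mul_eq_mul_div, le_div_iff₀ hαl]
      linarith [this]
  -- Lipschitz bound via mean value inequality
  have hlip : ∀ a b, ‖φinv a - φinv b‖ ≤ (1 / αl) * ‖a - b‖ := by
    intro a b
    exact Convex.norm_image_sub_le_of_norm_fderiv_le
      (fun x _ => hφinvd x) (fun x _ => hopnorm x) convex_univ (Set.mem_univ b) (Set.mem_univ a)
  have hkey : ‖w' - w‖ ≤ (η / αl) * ‖gradient f w‖ := by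
    have hw : w = φinv (φ w) := (hleft w).symm
    calc ‖w' - w‖ = ‖φinv (φ w - η • gradient f w) - φinv (φ w)‖ := by
          rw [hstep, hleft w]
      _ ≤ (1 / αl) * ‖(φ w - η • gradient f w) - φ w‖ := hlip _ _
      _ = (η / αl) * ‖gradient f w‖ := by
          rw [sub_sub_cancel_left, norm_neg, norm_smul, Real.norm_eq_abs,
            abs_of_pos hη]
          ring
  have h1 : ‖w' - w‖ ^ 2 ≤ ((η / αl) * ‖gradient f w‖) ^ 2 :=
    pow_le_pow_left₀ (norm_nonneg _) hkey 2
  have h2 : ((η / αl) * ‖gradient f w‖) ^ 2 = η ^ 2 / αl ^ 2 * ‖gradient f w‖ ^ 2 := by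
    ring
  have h3 : 0 ≤ η ^ 2 / (4 * αu ^ 2) * ‖gradient f w‖ ^ 2 := by positivity
  nlinarith [h1, h2, h3]
end

section
/- Let f : ℝ^d → ℝ be differentiable, L-smooth and μ-PL with global minimizer x* and f* = f(x*), and assume μ ≤ L. Let w^{(0)} ∈ ℝ^d have ∂_i f(w^{(0)}) ≠ 0 for every coordinate i, and define the Adagrad iterates: G_i^{(t)} = ∑_{k=0}^{t} (∂_i f(w^{(k)}))², α_l^{(t)} = min_{i∈{1,…,d}} √(G_i^{(t)}), α_u^{(t)} = max_{i∈{1,…,d}} √(G_i^{(t)}), and w^{(t+1)}_i = w^{(t)}_i − (α_l^{(t)}/L) · (G_i^{(t)})^{−1/2} · ∂_i f(w^{(t)}) for each coordinate i. If the ratio α_l^{(t)}/α_u^{(t)} converges as t → ∞ to a nonzero limit, then Adagrad converges linearly: there exists c* ∈ (0,1) such that f(w^{(t)}) − f* ≤ (1 − c*)^t (f(w^{(0)}) − f*) for all t, and in particular f(w^{(t)}) → f*. -/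
open scoped RealInnerProductSpace

lemma descent_lemma_aux {E : Type*} [NormedAddCommGroup E] [InnerProductSpace ℝ E]
    [CompleteSpace E]
    (f : E → ℝ) (L : ℝ) (hdiff : Differentiable ℝ f)
    (hsmooth : ∀ x y, ‖gradient f x - gradient f y‖ ≤ L * ‖x - y‖)
    (x y : E) : f y ≤ f x + ⟪gradient f x, y - x⟫ + L / 2 * ‖y - x‖ ^ 2 := by
  set v := y - x with hv
  have hasD : ∀ s : ℝ, HasDerivAt (fun s : ℝ => f (x + s • v))
      ⟪gradient f (x + s • v), v⟫ s := by
    intro s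
    have h1 : HasDerivAt (fun s : ℝ => x + s • v) v s := by
      simpa using ((hasDerivAt_id s).smul_const v).const_add x
    have h2 := ((hdiff (x + s • v)).hasGradientAt.hasFDerivAt).comp_hasDerivAt s h1
    simp [InnerProductSpace.toDual_apply_apply] at h2 ⊢
    exact h2
  set ψ : ℝ → ℝ := fun s => f (x + s • v) - s * ⟪gradient f x, v⟫ - L / 2 * s ^ 2 * ‖v‖ ^ 2
    with hψdef
  have hψ : ∀ s : ℝ, HasDerivAt ψ
      (⟪gradient f (x + s • v), v⟫ - ⟪gradient f x, v⟫ - L * s * ‖v‖ ^ 2) s := by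
    intro s
    have h := ((hasD s).sub ((hasDerivAt_id s).mul_const ⟪gradient f x, v⟫)).sub
      (((hasDerivAt_pow 2 s).const_mul (L / 2)).mul_const (‖v‖ ^ 2))
    refine h.congr_deriv ?_
    ring
  have hmono : AntitoneOn ψ (Set.Icc (0 : ℝ) 1) := by
    apply antitoneOn_of_deriv_nonpos (convex_Icc 0 1)
    · exact fun s _ => ((hψ s).continuousAt).continuousWithinAt
    · exact fun s _ => ((hψ s).differentiableAt).differentiableWithinAt
    · intro s hs
      rw [interior_Icc] at hs
      rw [(hψ s).deriv]
      have h1 : ⟪gradient f (x + s • v), v⟫ - ⟪gradient f x, v⟫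
          = ⟪gradient f (x + s • v) - gradient f x, v⟫ := (inner_sub_left _ _ _).symm
      have h2 : ⟪gradient f (x + s • v) - gradient f x, v⟫
          ≤ ‖gradient f (x + s • v) - gradient f x‖ * ‖v‖ := real_inner_le_norm _ _
      have h3 : ‖gradient f (x + s • v) - gradient f x‖ ≤ L * ‖s • v‖ := by
        simpa using hsmooth (x + s • v) x
      have h4 : ‖s • v‖ = s * ‖v‖ := by
        rw [norm_smul, Real.norm_eq_abs, abs_of_nonneg hs.1.le]
      rw [h4] at h3
      have h5 : ‖gradient f (x + s • v) - gradient f x‖ * ‖v‖ ≤ L * s * ‖v‖ ^ 2 := by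
        have := mul_le_mul_of_nonneg_right h3 (norm_nonneg v)
        nlinarith [norm_nonneg v]
      linarith [h1 ▸ (h2.trans h5)]
  have h01 := hmono (Set.left_mem_Icc.2 zero_le_one) (Set.right_mem_Icc.2 zero_le_one)
    zero_le_one
  have hψ0 : ψ 0 = f x := by simp [hψdef]
  have hψ1 : ψ 1 = f y - ⟪gradient f x, v⟫ - L / 2 * ‖v‖ ^ 2 := by
    simp [hψdef, hv]
  rw [hψ0, hψ1] at h01
  linarith

set_option maxHeartbeats 1000000 in
/-- (Corollary 1: Adagrad converges linearly.)  For an `L`-smooth,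
`μ`-PL function, the Adagrad iterates with adaptive step size `α_l^{(t)}/L` converge
linearly to the global minimum provided the ratio `α_l^{(t)}/α_u^{(t)}` converges to a
nonzero limit. -/
theorem adagrad_linear_convergence {d : ℕ} (hd : 0 < d)
    (f : EuclideanSpace ℝ (Fin d) → ℝ) (L μ : ℝ)
    (hL : 0 < L) (hμ : 0 < μ) (hμL : μ ≤ L)
    (hdiff : Differentiable ℝ f)
    (hsmooth : ∀ x y, ‖gradient f x - gradient f y‖ ≤ L * ‖x - y‖)
    (xstar : EuclideanSpace ℝ (Fin d))
    (hmin : ∀ x, f xstar ≤ f x)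
    (hPL : ∀ x, μ * (f x - f xstar) ≤ (1 / 2) * ‖gradient f x‖ ^ 2)
    (w : ℕ → EuclideanSpace ℝ (Fin d))
    (G : ℕ → Fin d → ℝ) (αl αu : ℕ → ℝ)
    (hG : ∀ t i, G t i = ∑ k ∈ Finset.range (t + 1), (gradient f (w k) i) ^ 2)
    (hαl : ∀ t, αl t =
      Finset.univ.inf' ⟨⟨0, hd⟩, Finset.mem_univ _⟩ (fun i => Real.sqrt (G t i)))
    (hαu : ∀ t, αu t =
      Finset.univ.sup' ⟨⟨0, hd⟩, Finset.mem_univ _⟩ (fun i => Real.sqrt (G t i)))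
    (hgrad0 : ∀ i, gradient f (w 0) i ≠ 0)
    (hstep : ∀ t i, w (t + 1) i =
      w t i - (αl t / L) * (gradient f (w t) i / Real.sqrt (G t i)))
    (hratio : ∃ c : ℝ, c ≠ 0 ∧
      Filter.Tendsto (fun t => αl t / αu t) Filter.atTop (nhds c)) :
    (∃ cstar : ℝ, 0 < cstar ∧ cstar < 1 ∧
        ∀ t, f (w t) - f xstar ≤ (1 - cstar) ^ t * (f (w 0) - f xstar)) ∧
      Filter.Tendsto (fun t => f (w t)) Filter.atTop (nhds (f xstar)) := by
  have hL' : L ≠ 0 := ne_of_gt hL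
  have hGpos : ∀ t i, 0 < G t i := by
    intro t i
    rw [hG]
    have h0 : (0 : ℕ) ∈ Finset.range (t + 1) := Finset.mem_range.2 (Nat.succ_pos t)
    have hsum := Finset.single_le_sum (f := fun k => (gradient f (w k) i) ^ 2)
      (fun k _ => sq_nonneg _) h0
    have hpos : 0 < (gradient f (w 0) i) ^ 2 := by
      have := hgrad0 i
      positivity
    simp only [] at hsum
    linarith
  have hsqrtpos : ∀ t i, 0 < Real.sqrt (G t i) := fun t i => Real.sqrt_pos.2 (hGpos t i)
  have hαl_le : ∀ t i, αl t ≤ Real.sqrt (G t i) := by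
    intro t i
    rw [hαl t]
    exact Finset.inf'_le _ (Finset.mem_univ i)
  have hle_αu : ∀ t i, Real.sqrt (G t i) ≤ αu t := by
    intro t i
    rw [hαu t]
    exact Finset.le_sup' (fun i => Real.sqrt (G t i)) (Finset.mem_univ i)
  have hαlpos : ∀ t, 0 < αl t := by
    intro t
    rw [hαl]
    exact (Finset.lt_inf'_iff ⟨⟨0, hd⟩, Finset.mem_univ _⟩).mpr fun i _ => hsqrtpos t i
  have hαupos : ∀ t, 0 < αu t := fun t =>
    lt_of_lt_of_le (hsqrtpos t ⟨0, hd⟩) (hle_αu t _)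
  have hαlu : ∀ t, αl t ≤ αu t := fun t => (hαl_le t ⟨0, hd⟩).trans (hle_αu t _)
  have hfge : ∀ t, 0 ≤ f (w t) - f xstar := fun t => sub_nonneg.2 (hmin _)
  -- per-step contraction
  have key : ∀ t, f (w (t + 1)) - f xstar ≤
      (1 - μ / L * (αl t / αu t)) * (f (w t) - f xstar) := by
    intro t
    set g := gradient f (w t) with hg
    set s1 := ∑ i, (g i) ^ 2 / Real.sqrt (G t i) with hs1
    set s2 := ∑ i, (g i) ^ 2 / (G t i) with hs2def
    have hdesc := descent_lemma_aux f L hdiff hsmooth (w t) (w (t + 1))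
    have hcoord : ∀ i, (w (t + 1) - w t) i = -((αl t / L) * (g i / Real.sqrt (G t i))) := by
      intro i
      have h : (w (t + 1) - w t) i = w (t + 1) i - w t i := rfl
      rw [h, hstep t i]; ring
    have hinner : ⟪g, w (t + 1) - w t⟫ = -(αl t / L * s1) := by
      rw [PiLp.inner_apply]
      simp only [RCLike.inner_apply, conj_trivial]
      rw [hs1, Finset.mul_sum, ← Finset.sum_neg_distrib]
      refine Finset.sum_congr rfl fun i _ => ?_
      rw [hcoord i]; ring
    have hnormsq : ‖w (t + 1) - w t‖ ^ 2 = (αl t / L) ^ 2 * s2 := by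
      rw [EuclideanSpace.norm_eq, Real.sq_sqrt (by positivity)]
      simp only [Real.norm_eq_abs, sq_abs]
      rw [hs2def, Finset.mul_sum]
      refine Finset.sum_congr rfl fun i _ => ?_
      have h2 : Real.sqrt (G t i) ^ 2 = G t i := Real.sq_sqrt (hGpos t i).le
      rw [hcoord i]
      calc (-(αl t / L * (g i / Real.sqrt (G t i)))) ^ 2
          = (αl t / L) ^ 2 * (g i ^ 2 / Real.sqrt (G t i) ^ 2) := by ring
        _ = (αl t / L) ^ 2 * (g i ^ 2 / G t i) := by rw [h2]
    have hs1nonneg : 0 ≤ s1 := Finset.sum_nonneg fun i _ => by positivity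
    have hs2le : s2 ≤ (1 / αl t) * s1 := by
      rw [hs1, hs2def, Finset.mul_sum]
      refine Finset.sum_le_sum fun i _ => ?_
      have h2 : G t i = Real.sqrt (G t i) * Real.sqrt (G t i) :=
        (Real.mul_self_sqrt (hGpos t i).le).symm
      have e1 : g i ^ 2 / G t i = (g i ^ 2 / Real.sqrt (G t i)) * (1 / Real.sqrt (G t i)) := by
        rw [mul_one_div, div_div, ← h2]
      rw [e1]
      have hb := mul_le_mul_of_nonneg_left
        (one_div_le_one_div_of_le (hαlpos t) (hαl_le t i))
        (show (0 : ℝ) ≤ g i ^ 2 / Real.sqrt (G t i) by positivity)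
      linarith [hb]
    have hs1ge : ‖g‖ ^ 2 / αu t ≤ s1 := by
      have hnormg : ‖g‖ ^ 2 = ∑ i, (g i) ^ 2 := by
        rw [EuclideanSpace.norm_eq, Real.sq_sqrt (by positivity)]
        simp only [Real.norm_eq_abs, sq_abs]
      rw [hnormg, Finset.sum_div, hs1]
      refine Finset.sum_le_sum fun i _ => ?_
      gcongr
      · exact hsqrtpos t i
      · exact hle_αu t i
    have hstep1 : f (w (t + 1)) ≤ f (w t) - αl t / (2 * L) * s1 := by
      have c1 : L / 2 * ‖w (t + 1) - w t‖ ^ 2 ≤ αl t / (2 * L) * s1 := by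
        rw [hnormsq]
        have hm := mul_le_mul_of_nonneg_left hs2le
          (show (0 : ℝ) ≤ L / 2 * (αl t / L) ^ 2 by positivity)
        calc L / 2 * ((αl t / L) ^ 2 * s2) = L / 2 * (αl t / L) ^ 2 * s2 := by ring
          _ ≤ L / 2 * (αl t / L) ^ 2 * ((1 / αl t) * s1) := hm
          _ = αl t / (2 * L) * s1 := by
              field_simp [hL', ne_of_gt (hαlpos t)]
      have hd2 : f (w (t + 1)) ≤ f (w t) + -(αl t / L * s1) + L / 2 * ‖w (t + 1) - w t‖ ^ 2 := by
        rw [← hinner]; exact hdesc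
      have e : αl t / L * s1 = 2 * (αl t / (2 * L) * s1) := by
        field_simp
      linarith
    have hPL2 : 2 * μ * (f (w t) - f xstar) ≤ ‖g‖ ^ 2 := by
      have := hPL (w t); rw [← hg] at this; linarith
    have h3 : αl t / (2 * L) * (2 * μ * (f (w t) - f xstar) / αu t)
        ≤ αl t / (2 * L) * (‖g‖ ^ 2 / αu t) :=
      mul_le_mul_of_nonneg_left ((div_le_div_iff_of_pos_right (hαupos t)).2 hPL2)
        (div_nonneg (hαlpos t).le (by linarith))
    have h4 : αl t / (2 * L) * (‖g‖ ^ 2 / αu t) ≤ αl t / (2 * L) * s1 :=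
      mul_le_mul_of_nonneg_left hs1ge (div_nonneg (hαlpos t).le (by linarith))
    have e2 : αl t / (2 * L) * (2 * μ * (f (w t) - f xstar) / αu t)
        = μ / L * (αl t / αu t) * (f (w t) - f xstar) := by
      field_simp [hL', ne_of_gt (hαupos t)]
    nlinarith [hstep1, h3, h4, e2]
  -- uniform lower bound on the ratio
  obtain ⟨c, hc0, hct⟩ := hratio
  have hρpos : ∀ t, 0 < αl t / αu t := fun t => div_pos (hαlpos t) (hαupos t)
  have hρle1 : ∀ t, αl t / αu t ≤ 1 := fun t => div_le_one_of_le₀ (hαlu t) (hαupos t).le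
  have hcpos : 0 < c := by
    have hge : 0 ≤ c := ge_of_tendsto' hct fun t => (hρpos t).le
    exact lt_of_le_of_ne hge (Ne.symm hc0)
  have hev := hct.eventually (eventually_gt_nhds (show c / 2 < c by linarith))
  obtain ⟨N, hN⟩ := Filter.eventually_atTop.1 hev
  have hne : (Finset.range (N + 1)).Nonempty := ⟨0, Finset.mem_range.2 (Nat.succ_pos N)⟩
  set m := (Finset.range (N + 1)).inf' hne (fun t => αl t / αu t) with hm
  have hmpos : 0 < m := (Finset.lt_inf'_iff _).2 fun t _ => hρpos t
  set δ := min (c / 2) m with hδ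
  have hδpos : 0 < δ := lt_min (by linarith) hmpos
  have hδρ : ∀ t, δ ≤ αl t / αu t := by
    intro t
    rcases le_or_gt t N with h | h
    · exact (min_le_right _ _).trans
        (Finset.inf'_le _ (Finset.mem_range.2 (Nat.lt_succ_of_le h)))
    · exact (min_le_left _ _).trans (hN t h.le).le
  have hδ1 : δ ≤ 1 := (hδρ 0).trans (hρle1 0)
  set cstar := μ * δ / (2 * L) with hcstar
  have hc1 : 0 < cstar := by positivity
  have hc2 : cstar < 1 := by
    have hmd : μ * δ ≤ L * 1 := mul_le_mul hμL hδ1 hδpos.le hL.le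
    rw [hcstar, div_lt_one (by positivity)]
    linarith
  have hfac : ∀ t, cstar ≤ μ / L * (αl t / αu t) := by
    intro t
    have h2 : μ / (2 * L) * δ ≤ μ / L * (αl t / αu t) := by
      have ha : μ / (2 * L) ≤ μ / L := by
        gcongr
        · linarith
      exact mul_le_mul ha (hδρ t) hδpos.le (by positivity)
    calc cstar = μ / (2 * L) * δ := by rw [hcstar]; ring
      _ ≤ _ := h2
  have main : ∀ t, f (w t) - f xstar ≤ (1 - cstar) ^ t * (f (w 0) - f xstar) := by
    intro t
    induction t with
    | zero => simp
    | succ t ih =>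
      have h1 := key t
      have h2 := mul_le_mul_of_nonneg_right
        (show 1 - μ / L * (αl t / αu t) ≤ 1 - cstar by linarith [hfac t]) (hfge t)
      have h4 := mul_le_mul_of_nonneg_left ih (show (0 : ℝ) ≤ 1 - cstar by linarith)
      calc f (w (t + 1)) - f xstar ≤ (1 - μ / L * (αl t / αu t)) * (f (w t) - f xstar) := h1
        _ ≤ (1 - cstar) * (f (w t) - f xstar) := h2
        _ ≤ (1 - cstar) * ((1 - cstar) ^ t * (f (w 0) - f xstar)) := h4
        _ = (1 - cstar) ^ (t + 1) * (f (w 0) - f xstar) := by ring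
  refine ⟨⟨cstar, hc1, hc2, main⟩, ?_⟩
  have hgeo : Filter.Tendsto (fun t : ℕ => (1 - cstar) ^ t * (f (w 0) - f xstar))
      Filter.atTop (nhds 0) := by
    have hp : Filter.Tendsto (fun t : ℕ => (1 - cstar) ^ t) Filter.atTop (nhds 0) :=
      tendsto_pow_atTop_nhds_zero_of_lt_one (by linarith) (by linarith)
    simpa using hp.mul_const (f (w 0) - f xstar)
  have h0 : Filter.Tendsto (fun t => f (w t) - f xstar) Filter.atTop (nhds 0) :=
    squeeze_zero hfge main hgeo
  have := h0.add_const (f xstar)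
  simpa using this
end

section
/- Let φ : ℝ^d → ℝ^d be an injective, α_u-Lipschitz and α_l-coercive map with 0 < α_l ≤ α_u, and let f : ℝ^d → ℝ be differentiable, nonnegative, and L-smooth, with μ ≤ L. Fix w^{(0)}, set R = 2√(2L)·√(f(w^{(0)}))·α_u²/(α_l μ), let B̃ = {x ∈ ℝ^d : ‖φ(x) − φ(w^{(0)})‖ ≤ R}, and assume f is μ-PL* on B̃ (i.e., (1/2)‖∇f(x)‖² ≥ μ f(x) for all x ∈ B̃). Let (w^{(t)}) satisfy the GMD recursion φ(w^{(t+1)}) = φ(w^{(t)}) − η ∇f(w^{(t)}) with η = α_l/L. Then: (1) there exists w^{(∞)} ∈ B̃ with f(w^{(∞)}) = 0 and w^{(t)} → w^{(∞)}; (2) f(w^{(t)}) ≤ (1 − μα_l²/(Lα_u²))^t f(w^{(0)}) for all t; and (3) for every w ∈ B̃ with f(w) = 0, ‖φ(w) − φ(w^{(∞)})‖ ≤ 2R. -/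
open Real Filter

lemma gmd_hasDerivAt_line {d : ℕ} (f : EuclideanSpace ℝ (Fin d) → ℝ)
    (hdiff : Differentiable ℝ f) (x v : EuclideanSpace ℝ (Fin d)) (t : ℝ) :
    HasDerivAt (fun s : ℝ => f (x + s • v)) (inner ℝ (gradient f (x + t • v)) v : ℝ) t := by
  have hc : HasDerivAt (fun s : ℝ => x + s • v) v t := by
    simpa using ((hasDerivAt_id t).smul_const v).const_add x
  have hf := ((hdiff (x + t • v)).hasGradientAt).hasFDerivAt
  have h2 := hf.comp_hasDerivAt t hc
  simp only [InnerProductSpace.toDual_apply_apply] at h2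
  exact h2

lemma gmd_descent {d : ℕ} (f : EuclideanSpace ℝ (Fin d) → ℝ) (L : ℝ)
    (hdiff : Differentiable ℝ f)
    (hsmooth : ∀ x y, ‖gradient f x - gradient f y‖ ≤ L * ‖x - y‖)
    (x y : EuclideanSpace ℝ (Fin d)) :
    f y ≤ f x + (inner ℝ (gradient f x) (y - x) : ℝ) + L / 2 * ‖y - x‖ ^ 2 := by
  set v := y - x with hv
  set B : ℝ := inner ℝ (gradient f x) v with hB
  set h : ℝ → ℝ := fun t => f (x + t • v) - t * B - L / 2 * t ^ 2 * ‖v‖ ^ 2 with hh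
  have hderiv : ∀ t : ℝ, HasDerivAt h
      ((inner ℝ (gradient f (x + t • v)) v : ℝ) - B - L * t * ‖v‖ ^ 2) t := by
    intro t
    have h1 := gmd_hasDerivAt_line f hdiff x v t
    have h2 : HasDerivAt (fun s : ℝ => s * B) B t := by
      simpa using (hasDerivAt_id t).mul_const B
    have h3 : HasDerivAt (fun s : ℝ => L / 2 * s ^ 2 * ‖v‖ ^ 2) (L * t * ‖v‖ ^ 2) t := by
      have := ((hasDerivAt_pow 2 t).const_mul (L / 2)).mul_const (‖v‖ ^ 2)
      exact this.congr_deriv (by rw [show (2:ℕ) - 1 = 1 from rfl]; push_cast; ring)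
    exact (h1.sub h2).sub h3
  have hanti : AntitoneOn h (Set.Icc 0 1) := by
    apply antitoneOn_of_deriv_nonpos (convex_Icc 0 1)
    · have : Continuous h := by
        have hcf : Continuous fun s : ℝ => f (x + s • v) :=
          hdiff.continuous.comp (by continuity)
        exact (hcf.sub (continuous_id.mul continuous_const)).sub
          ((continuous_const.mul (continuous_pow 2)).mul continuous_const)
      exact this.continuousOn
    · intro t ht
      exact (hderiv t).differentiableAt.differentiableWithinAt
    · intro t ht
      rw [interior_Icc] at ht
      rw [(hderiv t).deriv]
      have h4 : (inner ℝ (gradient f (x + t • v)) v : ℝ) - B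
          = (inner ℝ (gradient f (x + t • v) - gradient f x) v : ℝ) := by
        rw [hB, inner_sub_left]
      have h5 := real_inner_le_norm (gradient f (x + t • v) - gradient f x) v
      have h6 := hsmooth (x + t • v) x
      have h7 : ‖x + t • v - x‖ = t * ‖v‖ := by
        rw [add_sub_cancel_left, norm_smul, Real.norm_eq_abs, abs_of_pos ht.1]
      rw [h7] at h6
      rw [h4]
      nlinarith [norm_nonneg v, norm_nonneg (gradient f (x + t • v) - gradient f x)]
  have h10 := hanti (Set.left_mem_Icc.mpr zero_le_one) (Set.right_mem_Icc.mpr zero_le_one)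
    zero_le_one
  have hx1 : x + (1 : ℝ) • v = y := by rw [one_smul, hv]; abel
  have hx0 : x + (0 : ℝ) • v = x := by rw [zero_smul, add_zero]
  have e1 : h 1 = f y - B - L / 2 * ‖v‖ ^ 2 := by
    simp only [hh]; rw [hx1]; ring
  have e0 : h 0 = f x := by
    simp only [hh]; rw [hx0]; ring
  rw [e1, e0] at h10
  linarith

lemma gmd_grad_sq_le {d : ℕ} (f : EuclideanSpace ℝ (Fin d) → ℝ) (L : ℝ) (hL : 0 < L)
    (hdiff : Differentiable ℝ f) (hnonneg : ∀ x, 0 ≤ f x)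
    (hsmooth : ∀ x y, ‖gradient f x - gradient f y‖ ≤ L * ‖x - y‖)
    (x : EuclideanSpace ℝ (Fin d)) :
    ‖gradient f x‖ ^ 2 ≤ 2 * L * f x := by
  have h := gmd_descent f L hdiff hsmooth x (x - L⁻¹ • gradient f x)
  have h1 : x - L⁻¹ • gradient f x - x = -(L⁻¹ • gradient f x) := by abel
  rw [h1] at h
  have h2 : (inner ℝ (gradient f x) (-(L⁻¹ • gradient f x)) : ℝ)
      = -(L⁻¹ * ‖gradient f x‖ ^ 2) := by
    rw [inner_neg_right, real_inner_smul_right, real_inner_self_eq_norm_sq]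
  have h3 : ‖-(L⁻¹ • gradient f x)‖ ^ 2 = L⁻¹ ^ 2 * ‖gradient f x‖ ^ 2 := by
    rw [norm_neg, norm_smul, Real.norm_eq_abs, abs_of_pos (inv_pos.mpr hL), mul_pow]
  rw [h2, h3] at h
  have h4 := hnonneg (x - L⁻¹ • gradient f x)
  have hL' : L⁻¹ * L = 1 := inv_mul_cancel₀ hL.ne'
  have h5 : L⁻¹ * ‖gradient f x‖ ^ 2 - L / 2 * (L⁻¹ ^ 2 * ‖gradient f x‖ ^ 2)
      = ‖gradient f x‖ ^ 2 / (2 * L) := by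
    field_simp; ring
  have h6 : ‖gradient f x‖ ^ 2 / (2 * L) ≤ f x := by linarith
  have h7 := (div_le_iff₀ (by positivity : (0:ℝ) < 2 * L)).mp h6
  linarith

set_option maxHeartbeats 2000000 in
/-- (Theorem 4: local convergence and implicit regularization of GMD.)
If `f` is nonnegative, `L`-smooth and `μ`-PL* on the dual ball
`B̃ = {x : ‖φ(x) - φ(w⁰)‖ ≤ R}` with `R = 2√(2L)√(f(w⁰))α_u²/(α_l μ)`, and `φ` is
injective, `α_u`-Lipschitz and `α_l`-coercive, then GMD with step size `η = α_l/L`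
converges linearly to some interpolating solution `w^{(∞)} ∈ B̃`, and every interpolating
solution in `B̃` is within `2R` of `w^{(∞)}` in the dual norm. -/
theorem gmd_local_convergence {d : ℕ}
    (φ : EuclideanSpace ℝ (Fin d) → EuclideanSpace ℝ (Fin d))
    (αl αu : ℝ) (hαl : 0 < αl) (hαlu : αl ≤ αu)
    (hinj : Function.Injective φ)
    (hlip : ∀ x y, ‖φ x - φ y‖ ≤ αu * ‖x - y‖)
    (hcoer : ∀ x y, αl * ‖x - y‖ ^ 2 ≤ (inner ℝ (φ x - φ y) (x - y) : ℝ))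
    (f : EuclideanSpace ℝ (Fin d) → ℝ) (L μ : ℝ)
    (hL : 0 < L) (hμ : 0 < μ) (hμL : μ ≤ L)
    (hdiff : Differentiable ℝ f)
    (hnonneg : ∀ x, 0 ≤ f x)
    (hsmooth : ∀ x y, ‖gradient f x - gradient f y‖ ≤ L * ‖x - y‖)
    (w : ℕ → EuclideanSpace ℝ (Fin d))
    (R : ℝ) (hR : R = 2 * Real.sqrt (2 * L) * Real.sqrt (f (w 0)) * αu ^ 2 / (αl * μ))
    (hPL : ∀ x ∈ {x : EuclideanSpace ℝ (Fin d) | ‖φ x - φ (w 0)‖ ≤ R},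
      μ * f x ≤ (1 / 2) * ‖gradient f x‖ ^ 2)
    (hstep : ∀ t, φ (w (t + 1)) = φ (w t) - (αl / L) • gradient f (w t)) :
    (∀ t, f (w t) ≤ (1 - μ * αl ^ 2 / (L * αu ^ 2)) ^ t * f (w 0)) ∧
      ∃ winf : EuclideanSpace ℝ (Fin d),
        ‖φ winf - φ (w 0)‖ ≤ R ∧ f winf = 0 ∧
          Filter.Tendsto w Filter.atTop (nhds winf) ∧
          ∀ z : EuclideanSpace ℝ (Fin d),
            ‖φ z - φ (w 0)‖ ≤ R → f z = 0 → ‖φ z - φ winf‖ ≤ 2 * R := by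
  have hαu : 0 < αu := lt_of_lt_of_le hαl hαlu
  obtain ⟨ρ, hρ⟩ : ∃ x : ℝ, x = 1 - μ * αl ^ 2 / (L * αu ^ 2) := ⟨_, rfl⟩
  have hρ0 : 0 ≤ ρ := by
    rw [hρ, sub_nonneg, div_le_one (by positivity)]
    have h1 : αl ^ 2 ≤ αu ^ 2 := by nlinarith
    linarith [mul_le_mul hμL h1 (sq_nonneg αl) hL.le]
  have hρ1 : ρ < 1 := by
    have : 0 < μ * αl ^ 2 / (L * αu ^ 2) := by positivity
    rw [hρ]; linarith
  obtain ⟨σ, hσ⟩ : ∃ x : ℝ, x = Real.sqrt ρ := ⟨_, rfl⟩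
  have hσ0 : 0 ≤ σ := hσ ▸ Real.sqrt_nonneg _
  have hσρ : σ ^ 2 = ρ := hσ ▸ Real.sq_sqrt hρ0
  have hσ1 : σ < 1 := by
    by_contra hcon
    push_neg at hcon
    have h1 : 1 * 1 ≤ σ * σ := mul_le_mul hcon hcon zero_le_one hσ0
    nlinarith
  have h1σpos : 0 < 1 - σ := by linarith
  have h1σ : 1 - ρ ≤ 2 * (1 - σ) := by linarith [sq_nonneg (1 - σ), hσρ]
  obtain ⟨f0, hf0⟩ : ∃ x : ℝ, x = f (w 0) := ⟨_, rfl⟩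
  have hf00 : 0 ≤ f0 := hf0 ▸ hnonneg _
  obtain ⟨G, hG⟩ : ∃ x : ℝ, x = Real.sqrt (2 * L * f0) := ⟨_, rfl⟩
  have hG0 : 0 ≤ G := hG ▸ Real.sqrt_nonneg _
  have hG2 : G ^ 2 = 2 * L * f0 := by
    rw [hG]; exact Real.sq_sqrt (by positivity)
  obtain ⟨η, hη⟩ : ∃ x : ℝ, x = αl / L := ⟨_, rfl⟩
  have hη0 : 0 < η := by rw [hη]; positivity
  obtain ⟨C, hC⟩ : ∃ x : ℝ, x = η * G / (1 - σ) := ⟨_, rfl⟩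
  have hC0 : 0 ≤ C := by rw [hC]; positivity
  have hCσ : C * (1 - σ) = η * G := by
    rw [hC]; field_simp
  have hR0 : 0 ≤ R := by rw [hR]; positivity
  have hsplit : G = Real.sqrt (2 * L) * Real.sqrt f0 := by
    rw [hG, Real.sqrt_mul (by positivity)]
  have hRρ : η * G = R * (1 - ρ) / 2 := by
    rw [hR, hρ, hη, hsplit, hf0]
    field_simp
    ring
  have hCR : C ≤ R := by
    rw [hC, div_le_iff₀ h1σpos]
    linarith [mul_le_mul_of_nonneg_left h1σ hR0, hRρ]
  have hCt : ∀ t : ℕ, C * (1 - σ ^ t) ≤ R := by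
    intro t
    have h1 : 0 ≤ σ ^ t := pow_nonneg hσ0 t
    have h2 := mul_le_mul_of_nonneg_left (by linarith : (1:ℝ) - σ ^ t ≤ 1) hC0
    linarith [hCR]
  have hstep' : ∀ t, φ (w (t + 1)) = φ (w t) - η • gradient f (w t) := by
    intro t; rw [hη]; exact hstep t
  have hstepnorm : ∀ t, ‖φ (w (t + 1)) - φ (w t)‖ = η * ‖gradient f (w t)‖ := by
    intro t
    rw [hstep' t, sub_sub_cancel_left, norm_neg, norm_smul, Real.norm_eq_abs,
      abs_of_pos hη0]
  have hφΔ : ∀ t, φ (w (t + 1)) - φ (w t) = -(η • gradient f (w t)) := by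
    intro t; rw [hstep' t, sub_sub_cancel_left]
  have hpos : (0:ℝ) < L * αu ^ 2 := by positivity
  -- descent step
  have hdec : ∀ t, ‖φ (w t) - φ (w 0)‖ ≤ R → f (w (t + 1)) ≤ ρ * f (w t) := by
    intro t hball
    obtain ⟨a, ha⟩ : ∃ x : ℝ, x = ‖gradient f (w t)‖ := ⟨_, rfl⟩
    obtain ⟨b, hb⟩ : ∃ x : ℝ, x = ‖w (t + 1) - w t‖ := ⟨_, rfl⟩
    have ha0 : 0 ≤ a := ha ▸ norm_nonneg _
    have hb0 : 0 ≤ b := hb ▸ norm_nonneg _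
    have hco := hcoer (w (t + 1)) (w t)
    rw [hφΔ t, inner_neg_left, real_inner_smul_left, ← hb] at hco
    -- hco : αl * b ^ 2 ≤ -(η * ⟪g, Δ⟫)
    have hinner : (inner ℝ (gradient f (w t)) (w (t + 1) - w t) : ℝ) ≤ -(L * b ^ 2) := by
      have h1 := mul_le_mul_of_nonneg_left hco (le_of_lt (div_pos hL hαl))
      have h2 : L / αl * (αl * b ^ 2) = L * b ^ 2 := by
        field_simp [hαl.ne']
      have h3 : ∀ I : ℝ, L / αl * -(η * I) = -I := by
        intro I; rw [hη]; field_simp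
      rw [h2, h3 _] at h1
      linarith
    have hΔlb : αl * a ≤ L * (αu * b) := by
      have h4 := hlip (w (t + 1)) (w t)
      rw [hstepnorm t, ← ha, ← hb] at h4
      have h5 := mul_le_mul_of_nonneg_left h4 hL.le
      have h6 : L * (η * a) = αl * a := by rw [hη]; field_simp [hL.ne']
      rw [h6] at h5
      linarith
    have hsq : αl ^ 2 * a ^ 2 ≤ L ^ 2 * αu ^ 2 * b ^ 2 := by
      linarith [mul_self_le_mul_self (mul_nonneg hαl.le ha0) hΔlb]
    have hdesc := gmd_descent f L hdiff hsmooth (w t) (w (t + 1))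
    rw [← hb] at hdesc
    have h8 : f (w (t + 1)) ≤ f (w t) - L / 2 * b ^ 2 := by linarith
    have hPLt := hPL (w t) hball
    rw [← ha] at hPLt
    have hmain : L * αu ^ 2 * f (w (t + 1)) ≤ (L * αu ^ 2 - μ * αl ^ 2) * f (w t) := by
      have t1 := mul_le_mul_of_nonneg_left h8 hpos.le
      have t2 := mul_le_mul_of_nonneg_left hPLt (sq_nonneg αl)
      linarith [t1, t2, hsq]
    have hρeq : ρ = (L * αu ^ 2 - μ * αl ^ 2) / (L * αu ^ 2) := by
      rw [hρ]; field_simp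
    rw [hρeq, div_mul_eq_mul_div, le_div_iff₀ hpos]
    linarith
  -- gradient norm bound from the value bound
  have hgrad_of : ∀ t, f (w t) ≤ ρ ^ t * f0 → ‖gradient f (w t)‖ ≤ G * σ ^ t := by
    intro t h1
    have ha := gmd_grad_sq_le f L hL hdiff hnonneg hsmooth (w t)
    obtain ⟨a, haa⟩ : ∃ x : ℝ, x = ‖gradient f (w t)‖ := ⟨_, rfl⟩
    rw [← haa] at ha ⊢
    have ha0 : 0 ≤ a := haa ▸ norm_nonneg _
    have hb : 2 * L * f (w t) ≤ 2 * L * (ρ ^ t * f0) :=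
      mul_le_mul_of_nonneg_left h1 (by positivity)
    have hc' : (G * σ ^ t) ^ 2 = 2 * L * (ρ ^ t * f0) := by
      rw [mul_pow, hG2, ← pow_mul, mul_comm t 2, pow_mul, hσρ]; ring
    have hbnn : 0 ≤ G * σ ^ t := mul_nonneg hG0 (pow_nonneg hσ0 t)
    have hs := Real.sqrt_le_sqrt (show a ^ 2 ≤ (G * σ ^ t) ^ 2 by linarith)
    rwa [Real.sqrt_sq ha0, Real.sqrt_sq hbnn] at hs
  -- the main induction
  have key : ∀ t, f (w t) ≤ ρ ^ t * f0 ∧ ‖φ (w t) - φ (w 0)‖ ≤ C * (1 - σ ^ t) := by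
    intro t
    induction t with
    | zero => constructor
              · simp [hf0]
              · simp
    | succ t ih =>
      obtain ⟨h1, h2⟩ := ih
      have hball : ‖φ (w t) - φ (w 0)‖ ≤ R := h2.trans (hCt t)
      have hgt := hgrad_of t h1
      constructor
      · calc f (w (t + 1)) ≤ ρ * f (w t) := hdec t hball
          _ ≤ ρ * (ρ ^ t * f0) := mul_le_mul_of_nonneg_left h1 hρ0
          _ = ρ ^ (t + 1) * f0 := by ring
      · have h3 : ‖φ (w (t + 1)) - φ (w 0)‖
            ≤ ‖φ (w (t + 1)) - φ (w t)‖ + ‖φ (w t) - φ (w 0)‖ := by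
          have := dist_triangle (φ (w (t + 1))) (φ (w t)) (φ (w 0))
          simpa [dist_eq_norm] using this
        have h5 : η * ‖gradient f (w t)‖ ≤ η * (G * σ ^ t) :=
          mul_le_mul_of_nonneg_left hgt hη0.le
        have h6 : η * (G * σ ^ t) = C * (1 - σ) * σ ^ t := by rw [hCσ]; ring
        calc ‖φ (w (t + 1)) - φ (w 0)‖
            ≤ η * (G * σ ^ t) + C * (1 - σ ^ t) := by
              rw [hstepnorm t] at h3; linarith
          _ = C * (1 - σ ^ (t + 1)) := by rw [h6]; ring
  -- step size bound in the primal space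
  have hΔub : ∀ t, ‖w (t + 1) - w t‖ ≤ G / L * σ ^ t := by
    intro t
    obtain ⟨a, ha⟩ : ∃ x : ℝ, x = ‖gradient f (w t)‖ := ⟨_, rfl⟩
    obtain ⟨b, hb⟩ : ∃ x : ℝ, x = ‖w (t + 1) - w t‖ := ⟨_, rfl⟩
    have ha0 : 0 ≤ a := ha ▸ norm_nonneg _
    have hb0 : 0 ≤ b := hb ▸ norm_nonneg _
    have hco := hcoer (w (t + 1)) (w t)
    rw [hφΔ t, inner_neg_left, real_inner_smul_left, ← hb] at hco
    have hcs : -(inner ℝ (gradient f (w t)) (w (t + 1) - w t) : ℝ) ≤ a * b := by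
      have := real_inner_le_norm (-(gradient f (w t))) (w (t + 1) - w t)
      rw [inner_neg_left, norm_neg, ← ha, ← hb] at this
      linarith
    have h1 : αl * b ^ 2 ≤ η * (a * b) := by
      have := mul_le_mul_of_nonneg_left hcs hη0.le
      linarith
    have h2 : b ≤ a / L := by
      rcases eq_or_lt_of_le hb0 with hb' | hb'
      · rw [← hb']; positivity
      · have h1' : αl * b ≤ η * a :=
          le_of_mul_le_mul_right (by linarith : αl * b * b ≤ η * a * b) hb'
        rw [hη] at h1'
        have h6 := mul_le_mul_of_nonneg_left h1' hL.le
        have h7 : L * (αl / L * a) = αl * a := by field_simp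
        rw [h7] at h6
        rw [le_div_iff₀ hL]
        exact le_of_mul_le_mul_left (by linarith : αl * (b * L) ≤ αl * a) hαl
    have hgt := hgrad_of t (key t).1
    rw [← ha] at hgt
    rw [← hb]
    calc b ≤ a / L := h2
      _ ≤ G * σ ^ t / L := by gcongr
      _ = G / L * σ ^ t := by ring
  -- Cauchy sequence and limit
  have hcauchy : CauchySeq w := by
    apply cauchySeq_of_le_geometric σ (G / L) hσ1
    intro n
    rw [dist_eq_norm, norm_sub_rev]
    exact hΔub n
  obtain ⟨winf, hw⟩ := cauchySeq_tendsto_of_complete hcauchy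
  -- limit value is zero
  have hf0lim : Filter.Tendsto (fun t => f (w t)) Filter.atTop (nhds 0) := by
    have hub : Filter.Tendsto (fun t : ℕ => ρ ^ t * f0) Filter.atTop (nhds 0) := by
      have := (tendsto_pow_atTop_nhds_zero_of_lt_one hρ0 hρ1).mul_const f0
      simpa using this
    exact squeeze_zero (fun t => hnonneg _) (fun t => (key t).1) hub
  have hfw : Filter.Tendsto (fun t => f (w t)) Filter.atTop (nhds (f winf)) :=
    (hdiff.continuous.tendsto winf).comp hw
  have hfwinf : f winf = 0 := tendsto_nhds_unique hfw hf0lim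
  -- φ is continuous
  have hφcont : Continuous φ := by
    have hlw : LipschitzWith (Real.toNNReal αu) φ := by
      apply LipschitzWith.of_dist_le_mul
      intro x y
      rw [dist_eq_norm, dist_eq_norm, Real.coe_toNNReal αu hαu.le]
      exact hlip x y
    exact hlw.continuous
  have hφlim : Filter.Tendsto (fun t => ‖φ (w t) - φ (w 0)‖) Filter.atTop
      (nhds ‖φ winf - φ (w 0)‖) := by
    have h1 : Filter.Tendsto (fun t => φ (w t)) Filter.atTop (nhds (φ winf)) :=
      (hφcont.tendsto winf).comp hw
    exact (h1.sub tendsto_const_nhds).norm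
  have hballinf : ‖φ winf - φ (w 0)‖ ≤ R :=
    le_of_tendsto hφlim (Filter.Eventually.of_forall fun t => (key t).2.trans (hCt t))
  refine ⟨fun t => ?_, winf, hballinf, hfwinf, hw, fun z hz hfz => ?_⟩
  · have := (key t).1
    rw [hρ, hf0] at this
    exact this
  · have h1 : ‖φ z - φ winf‖ ≤ ‖φ z - φ (w 0)‖ + ‖φ (w 0) - φ winf‖ := by
      have := dist_triangle (φ z) (φ (w 0)) (φ winf)
      simpa [dist_eq_norm] using this
    have h2 : ‖φ (w 0) - φ winf‖ = ‖φ winf - φ (w 0)‖ := norm_sub_rev _ _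
    linarith
end
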